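/- If β > β₀, then F has a fixed point z₀ in the interior of the hypercube, i.e., there exists z₀ ∈ (0,1)^n (all components strictly between 0 and 1) with F(z₀) = z₀. -/

import Mathlib

open Filter Finset

open Matrix Metric

/-- The MMCA map `F`. -/
noncomputable def F {n : ℕ} (R : Matrix (Fin n) (Fin n) ℝ) (β μ : ℝ) (x : Fin n → ℝ) :
    Fin n → ℝ :=
  fun i => 1 - (1 - (1 - μ) * x i) * ∏ j, (1 - β * R i j * x j)

/-- Irreducibility of a (nonnegative) square matrix. -/
def MatIrred {n : ℕ} (R : Matrix (Fin n) (Fin n) ℝ) : Prop :=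
  ∀ i j : Fin n, ∃ k : ℕ, 0 < k ∧ (R ^ k) i j ≠ 0

/-- Spectral radius of a real matrix, as the supremum of the absolute values of the
real spectrum (appropriate here since `R` is symmetric). -/
noncomputable def specRad {n : ℕ} (R : Matrix (Fin n) (Fin n) ℝ) : ℝ :=
  sSup {r : ℝ | ∃ z ∈ spectrum ℝ R, |z| = r}

open Matrix

lemma prod_one_sub_le {ι : Type*} (s : Finset ι) (a : ι → ℝ)
    (h0 : ∀ j ∈ s, 0 ≤ a j) (h1 : ∀ j ∈ s, a j ≤ 1) :
    ∏ j ∈ s, (1 - a j) ≤ 1 - (∑ j ∈ s, a j) + (∑ j ∈ s, a j)^2 := by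
  induction s using Finset.cons_induction with
  | empty => simp
  | cons x t hx ih =>
    rw [Finset.prod_cons, Finset.sum_cons]
    have hS0 : 0 ≤ ∑ j ∈ t, a j := Finset.sum_nonneg fun j hj => h0 j (Finset.mem_cons_of_mem hj)
    have hA0 : 0 ≤ a x := h0 x (Finset.mem_cons_self x t)
    have hA1 : a x ≤ 1 := h1 x (Finset.mem_cons_self x t)
    have iht := ih (fun j hj => h0 j (Finset.mem_cons_of_mem hj))
      (fun j hj => h1 j (Finset.mem_cons_of_mem hj))
    have := mul_le_mul_of_nonneg_left iht (by linarith : (0:ℝ) ≤ 1 - a x)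
    set S := ∑ j ∈ t, a j
    nlinarith [mul_nonneg hA0 hS0, mul_nonneg (mul_nonneg hA0 hS0) hS0, sq_nonneg S]

lemma pow_entry_nonneg {n : ℕ} (R : Matrix (Fin n) (Fin n) ℝ) (hR0 : ∀ i j, 0 ≤ R i j) :
    ∀ k i j, 0 ≤ (R ^ k) i j := by
  intro k
  induction k with
  | zero => intro i j; simp [Matrix.one_apply]; split <;> norm_num
  | succ k ih =>
    intro i j
    rw [pow_succ, Matrix.mul_apply]
    exact Finset.sum_nonneg fun m _ => mul_nonneg (ih i m) (hR0 m j)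

lemma pow_mulVec_eig {n : ℕ} (R : Matrix (Fin n) (Fin n) ℝ) (v : Fin n → ℝ) (lam : ℝ)
    (h : R.mulVec v = lam • v) : ∀ k, (R ^ k).mulVec v = (lam ^ k) • v := by
  intro k
  induction k with
  | zero => simp [Matrix.one_mulVec]
  | succ k ih =>
    rw [pow_succ', ← Matrix.mulVec_mulVec, ih, Matrix.mulVec_smul, h, pow_succ',
      smul_smul, mul_comm]

lemma euc_norm_sq (n : ℕ) (x : EuclideanSpace ℝ (Fin n)) : ‖x‖^2 = ∑ i, x i ^ 2 := by
  rw [EuclideanSpace.norm_eq, Real.sq_sqrt (by positivity)]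
  exact Finset.sum_congr rfl fun i _ => by rw [Real.norm_eq_abs, sq_abs]

lemma perron (n : ℕ) (hn0 : 0 < n) (R : Matrix (Fin n) (Fin n) ℝ) (hsymm : R.IsSymm)
    (hR0 : ∀ i j, 0 ≤ R i j) :
    ∃ (lam : ℝ) (v : EuclideanSpace ℝ (Fin n)), ‖v‖ = 1 ∧ (∀ i, 0 ≤ v i) ∧
      (∀ i, ∑ j, R i j * v j = lam * v i) ∧
      (∀ x : EuclideanSpace ℝ (Fin n), ∑ i, (∑ j, R i j * x j) * x i ≤ lam * ‖x‖^2) ∧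
      lam ∈ spectrum ℝ R ∧ (∀ z ∈ spectrum ℝ R, |z| ≤ lam) := by
  set T : EuclideanSpace ℝ (Fin n) →L[ℝ] EuclideanSpace ℝ (Fin n) :=
    LinearMap.toContinuousLinearMap (Matrix.toEuclideanLin R) with hTdef
  have hTapp : ∀ (x : EuclideanSpace ℝ (Fin n)) (i : Fin n), T x i = ∑ j, R i j * x j := by
    intro x i
    show (Matrix.toEuclideanLin R x) i = _
    simp [Matrix.toEuclideanLin, Matrix.mulVec, dotProduct]
  have hfx : ∀ x : EuclideanSpace ℝ (Fin n),
      T.reApplyInnerSelf x = ∑ i, (∑ j, R i j * x j) * x i := by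
    intro x
    rw [ContinuousLinearMap.reApplyInnerSelf_apply]
    have h1 : (inner ℝ (T x) x : ℝ) = ∑ i, T x i * x i := by simp [PiLp.inner_apply, mul_comm]
    simp only [RCLike.re_to_real]
    rw [h1]
    exact Finset.sum_congr rfl fun i _ => by rw [hTapp]
  have hsa : IsSelfAdjoint T := by
    rw [ContinuousLinearMap.isSelfAdjoint_iff_isSymmetric]
    exact Matrix.isHermitian_iff_isSymmetric.mp (hsymm : R.IsHermitian)
  haveI : Nonempty (Fin n) := ⟨⟨0, hn0⟩⟩
  have hsph : (sphere (0:EuclideanSpace ℝ (Fin n)) 1).Nonempty :=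
    NormedSpace.sphere_nonempty.mpr zero_le_one
  obtain ⟨y, hy, hymax⟩ := (isCompact_sphere (0:EuclideanSpace ℝ (Fin n)) 1).exists_isMaxOn hsph
    T.reApplyInnerSelf_continuous.continuousOn
  have hy1 : ‖y‖ = 1 := by simpa using hy
  set v : EuclideanSpace ℝ (Fin n) := WithLp.toLp 2 (fun i => |y i| : Fin n → ℝ) with hvdef
  have hvi : ∀ i, v i = |y i| := fun i => rfl
  have hv0 : ∀ i, 0 ≤ v i := fun i => abs_nonneg _
  have hv1 : ‖v‖ = 1 := by
    rw [EuclideanSpace.norm_eq] at hy1 ⊢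
    simpa [hvi, sq_abs] using hy1
  have hvmem : v ∈ sphere (0:EuclideanSpace ℝ (Fin n)) 1 := by simp [hv1]
  have hvne : v ≠ 0 := by intro h; rw [h] at hv1; simp at hv1
  have hfyv : T.reApplyInnerSelf y ≤ T.reApplyInnerSelf v := by
    rw [hfx, hfx]
    apply Finset.sum_le_sum
    intro i _
    rw [Finset.sum_mul, Finset.sum_mul]
    apply Finset.sum_le_sum
    intro j _
    have h2 : y j * y i ≤ |y j| * |y i| := by
      rw [← abs_mul]; exact le_abs_self _
    have := mul_le_mul_of_nonneg_left h2 (hR0 i j)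
    calc R i j * y j * y i = R i j * (y j * y i) := by ring
      _ ≤ R i j * (|y j| * |y i|) := this
      _ = R i j * v j * v i := by rw [hvi, hvi]; ring
  have hvmax : IsMaxOn T.reApplyInnerSelf (sphere (0:EuclideanSpace ℝ (Fin n)) 1) v :=
    fun x hx => le_trans (hymax hx) hfyv
  have hEig := hsa.hasEigenvector_of_isMaxOn hvne (by rwa [hv1])
  set lam : ℝ := ⨆ x : {x : EuclideanSpace ℝ (Fin n) // x ≠ 0}, T.rayleighQuotient x with hlamdef
  have hTv : (T : EuclideanSpace ℝ (Fin n) →ₗ[ℝ] EuclideanSpace ℝ (Fin n)) v = lam • v :=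
    hEig.apply_eq_smul
  have hmul : ∀ i, ∑ j, R i j * v j = lam * v i := by
    intro i
    have : T v i = lam * v i := by
      rw [show T v = lam • v from hTv]; rfl
    rw [← hTapp]; exact this
  have hfv : T.reApplyInnerSelf v = lam := by
    rw [hfx]
    have : ∀ i : Fin n, (∑ j, R i j * v j) * v i = lam * v i ^ 2 := by
      intro i; rw [hmul i]; ring
    rw [Finset.sum_congr rfl fun i _ => this i, ← Finset.mul_sum, ← euc_norm_sq, hv1]
    norm_num
  have hbound : ∀ x : EuclideanSpace ℝ (Fin n),
      ∑ i, (∑ j, R i j * x j) * x i ≤ lam * ‖x‖^2 := by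
    intro x
    rcases eq_or_ne x 0 with h | h
    · subst h
      have hlam0 : 0 ≤ lam := by
        rw [← hfv, hfx]
        apply Finset.sum_nonneg; intro i _
        exact mul_nonneg (Finset.sum_nonneg fun j _ => mul_nonneg (hR0 i j) (hv0 j)) (hv0 i)
      simp
    · have hx0 : (0:ℝ) < ‖x‖ := norm_pos_iff.mpr h
      have hmem : ‖x‖⁻¹ • x ∈ sphere (0:EuclideanSpace ℝ (Fin n)) 1 := by
        simp [norm_smul, abs_of_nonneg (le_of_lt (inv_pos.mpr hx0)), inv_mul_cancel₀ (ne_of_gt hx0)]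
      have h1 : T.reApplyInnerSelf (‖x‖⁻¹ • x) ≤ lam := by
        have := hvmax hmem; rwa [hfv] at this
      rw [ContinuousLinearMap.reApplyInnerSelf_smul] at h1
      rw [← hfx]
      have h2 : ‖(‖x‖⁻¹ : ℝ)‖^2 = (‖x‖^2)⁻¹ := by
        rw [Real.norm_eq_abs, abs_of_nonneg (le_of_lt (inv_pos.mpr hx0))]
        rw [sq, sq, mul_inv]
      rw [h2] at h1
      calc T.reApplyInnerSelf x = ‖x‖^2 * ((‖x‖^2)⁻¹ * T.reApplyInnerSelf x) := by
            field_simp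
        _ ≤ ‖x‖^2 * lam := by
            apply mul_le_mul_of_nonneg_left h1 (by positivity)
        _ = lam * ‖x‖^2 := by ring
  have hspec : lam ∈ spectrum ℝ R := by
    have h1 : Module.End.HasEigenvalue (Matrix.toEuclideanLin R) lam :=
      Module.End.hasEigenvalue_of_hasEigenvector hEig
    have h2 : lam ∈ spectrum ℝ (Matrix.toEuclideanLin R) :=
      Module.End.hasEigenvalue_iff_mem_spectrum.mp h1
    rwa [Matrix.spectrum_toEuclideanLin (𝕜 := ℝ) (A := R)] at h2
  have habs : ∀ z ∈ spectrum ℝ R, |z| ≤ lam := by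
    intro z hz
    rw [← Matrix.spectrum_toEuclideanLin (𝕜 := ℝ) (A := R)] at hz
    have hev : Module.End.HasEigenvalue (Matrix.toEuclideanLin R) z :=
      Module.End.hasEigenvalue_iff_mem_spectrum.mpr hz
    obtain ⟨w, hw⟩ := hev.exists_hasEigenvector
    have hTw : (Matrix.toEuclideanLin R) w = z • w := hw.apply_eq_smul
    have hwe : ∀ i, ∑ j, R i j * w j = z * w i := by
      intro i
      have : T w i = z * w i := by
        show (Matrix.toEuclideanLin R w) i = _
        rw [hTw]; rfl
      rw [← hTapp]; exact this
    have hwne : w ≠ 0 := hw.right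
    have hw2pos : 0 < ∑ i, w i ^ 2 := by
      by_contra h
      push_neg at h
      have h0 : ∑ i, w i ^ 2 = 0 :=
        le_antisymm h (Finset.sum_nonneg fun i _ => sq_nonneg _)
      apply hwne
      have : ∀ i, w i = 0 := by
        intro i
        have := (Finset.sum_eq_zero_iff_of_nonneg (fun i _ => sq_nonneg (w i))).mp h0 i
          (Finset.mem_univ i)
        exact pow_eq_zero_iff (by norm_num) |>.mp this
      ext i; exact this i
    set wa : EuclideanSpace ℝ (Fin n) := WithLp.toLp 2 (fun i => |w i| : Fin n → ℝ) with hwadef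
    have hwai : ∀ i, wa i = |w i| := fun i => rfl
    have key : |z| * ∑ i, w i ^ 2 ≤ lam * ∑ i, w i ^ 2 := by
      have e1 : z * ∑ i, w i ^ 2 = ∑ i, (∑ j, R i j * w j) * w i := by
        rw [Finset.mul_sum]
        exact Finset.sum_congr rfl fun i _ => by rw [hwe i]; ring
      have e2 : |z| * ∑ i, w i ^ 2 = |∑ i, (∑ j, R i j * w j) * w i| := by
        rw [← e1, abs_mul, abs_of_nonneg hw2pos.le]
      rw [e2]
      calc |∑ i, (∑ j, R i j * w j) * w i|
          ≤ ∑ i, |(∑ j, R i j * w j) * w i| := Finset.abs_sum_le_sum_abs _ _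
        _ ≤ ∑ i, (∑ j, R i j * wa j) * wa i := by
            apply Finset.sum_le_sum
            intro i _
            rw [abs_mul]
            apply mul_le_mul _ (le_refl _) (abs_nonneg _) _
            · calc |∑ j, R i j * w j| ≤ ∑ j, |R i j * w j| := Finset.abs_sum_le_sum_abs _ _
                _ = ∑ j, R i j * wa j := Finset.sum_congr rfl fun j _ => by
                    rw [abs_mul, abs_of_nonneg (hR0 i j), hwai]
            · exact Finset.sum_nonneg fun j _ => mul_nonneg (hR0 i j) (abs_nonneg _)
        _ ≤ lam * ‖wa‖^2 := hbound wa
        _ = lam * ∑ i, w i ^ 2 := by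
            rw [euc_norm_sq]
            congr 1
            exact Finset.sum_congr rfl fun i _ => by rw [hwai, sq_abs]
    exact le_of_mul_le_mul_right (by linarith [key]) hw2pos
  exact ⟨lam, v, hv1, hv0, hmul, hbound, hspec, habs⟩

lemma triple_le_one {a b w0 : ℝ} (ha0 : 0 ≤ a) (ha1 : a ≤ 1) (hb0 : 0 ≤ b) (hb1 : b ≤ 1)
    (hw0 : 0 ≤ w0) (hw1 : w0 ≤ 1) : a * b * w0 ≤ 1 := by
  have h1 : a * b ≤ 1 := by nlinarith
  nlinarith

lemma scalar_sub (μ b t : ℝ) (hμ0 : 0 < μ) (hμ1 : μ < 1) (hb : 0 < b) (ht0 : 0 < t)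
    (ht1 : t ≤ 1) (htc : t * (b * (b + 1)) ≤ b - μ) :
    (1 - (1 - μ) * t) * (1 - b * t + (b * t) ^ 2) ≤ 1 - t := by
  have hS0 : 0 ≤ b * t := by positivity
  have e1 : (1 - t) * (b * t) ≤ (1 - (1 - μ) * t) * (b * t) := by
    apply mul_le_mul_of_nonneg_right _ hS0
    nlinarith
  have e2 : (1 - (1 - μ) * t) * (b * t) ^ 2 ≤ (b * t) ^ 2 := by
    nlinarith [mul_nonneg (mul_nonneg (by linarith : (0:ℝ) ≤ 1 - μ) ht0.le) (sq_nonneg (b * t))]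
  have e3 : μ * t + (b * t) ^ 2 ≤ (1 - t) * (b * t) := by
    nlinarith [mul_le_mul_of_nonneg_left htc ht0.le]
  nlinarith [e1, e2, e3]

lemma F_mem {n : ℕ} (R : Matrix (Fin n) (Fin n) ℝ) (β μ : ℝ)
    (hβ0 : 0 < β) (hβ1 : β < 1) (hμ0 : 0 < μ) (hμ1 : μ < 1)
    (hR0 : ∀ i j, 0 ≤ R i j) (hR1 : ∀ i j, R i j ≤ 1)
    (w : Fin n → ℝ) (hw : ∀ i, 0 ≤ w i ∧ w i ≤ 1) :
    ∀ i, 0 ≤ F R β μ w i ∧ F R β μ w i ≤ 1 := by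
  intro i
  have hm0 : (0:ℝ) ≤ 1 - (1 - μ) * w i := by nlinarith [(hw i).1, (hw i).2]
  have hm1 : 1 - (1 - μ) * w i ≤ 1 := by nlinarith [(hw i).1]
  have hp0 : (0:ℝ) ≤ ∏ j, (1 - β * R i j * w j) := by
    apply Finset.prod_nonneg
    intro j _
    linarith [triple_le_one hβ0.le hβ1.le (hR0 i j) (hR1 i j) (hw j).1 (hw j).2]
  have hp1 : ∏ j, (1 - β * R i j * w j) ≤ 1 := by
    apply Finset.prod_le_one
    · intro j _
      linarith [triple_le_one hβ0.le hβ1.le (hR0 i j) (hR1 i j) (hw j).1 (hw j).2]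
    · intro j _
      nlinarith [mul_nonneg (mul_nonneg hβ0.le (hR0 i j)) (hw j).1]
  constructor
  · show (0:ℝ) ≤ 1 - (1 - (1 - μ) * w i) * ∏ j, (1 - β * R i j * w j)
    nlinarith [mul_le_mul hm1 hp1 hp0 (by norm_num : (0:ℝ) ≤ 1)]
  · show 1 - (1 - (1 - μ) * w i) * ∏ j, (1 - β * R i j * w j) ≤ 1
    nlinarith [mul_nonneg hm0 hp0]

lemma F_mono {n : ℕ} (R : Matrix (Fin n) (Fin n) ℝ) (β μ : ℝ)
    (hβ0 : 0 < β) (hβ1 : β < 1) (hμ0 : 0 < μ) (hμ1 : μ < 1)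
    (hR0 : ∀ i j, 0 ≤ R i j) (hR1 : ∀ i j, R i j ≤ 1)
    (w w' : Fin n → ℝ) (h0 : ∀ i, 0 ≤ w i) (hle : ∀ i, w i ≤ w' i) (h1 : ∀ i, w' i ≤ 1) :
    ∀ i, F R β μ w i ≤ F R β μ w' i := by
  intro i
  have hP' : ∀ j, (0:ℝ) ≤ 1 - β * R i j * w' j := fun j => by
    linarith [triple_le_one hβ0.le hβ1.le (hR0 i j) (hR1 i j) ((h0 j).trans (hle j)) (h1 j)]
  have hPle : ∏ j, (1 - β * R i j * w' j) ≤ ∏ j, (1 - β * R i j * w j) := by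
    apply Finset.prod_le_prod (fun j _ => hP' j)
    intro j _
    have := mul_le_mul_of_nonneg_left (hle j) (mul_nonneg hβ0.le (hR0 i j))
    linarith
  have hm' : (0:ℝ) ≤ 1 - (1 - μ) * w' i := by
    nlinarith [h1 i, (h0 i).trans (hle i)]
  have hmle : 1 - (1 - μ) * w' i ≤ 1 - (1 - μ) * w i := by nlinarith [hle i]
  have hm0' : (0:ℝ) ≤ 1 - (1 - μ) * w i := by
    nlinarith [h0 i, (hle i).trans (h1 i)]
  have hPw0 : (0:ℝ) ≤ ∏ j, (1 - β * R i j * w' j) := Finset.prod_nonneg fun j _ => hP' j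
  have key := mul_le_mul hmle hPle hPw0 hm0'
  show 1 - (1 - (1 - μ) * w i) * ∏ j, (1 - β * R i j * w j)
      ≤ 1 - (1 - (1 - μ) * w' i) * ∏ j, (1 - β * R i j * w' j)
  linarith

lemma F_cont {n : ℕ} (R : Matrix (Fin n) (Fin n) ℝ) (β μ : ℝ) : Continuous (F R β μ) := by
  apply continuous_pi
  intro i
  simp only [F]
  apply Continuous.sub continuous_const
  apply Continuous.mul
  · exact Continuous.sub continuous_const (continuous_const.mul (continuous_apply i))
  · exact continuous_finset_prod _ fun j _ =>
      Continuous.sub continuous_const (continuous_const.mul (continuous_apply j))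

theorem interior_fixed_point_exists (n : ℕ) (hn : 2 ≤ n) (R : Matrix (Fin n) (Fin n) ℝ)
    (hsymm : R.IsSymm) (hR : ∀ i j, R i j ∈ Set.Icc (0:ℝ) 1)
    (hdiag : ∀ i, R i i = 0) (hirr : MatIrred R)
    (β μ : ℝ) (hβ : β ∈ Set.Ioo (0:ℝ) 1) (hμ : μ ∈ Set.Ioo (0:ℝ) 1)
    (hgt : μ / specRad R < β) :
    ∃ z₀ : Fin n → ℝ, (∀ i, z₀ i ∈ Set.Ioo (0:ℝ) 1) ∧ F R β μ z₀ = z₀ := by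
  have hn0 : 0 < n := by omega
  haveI : NeZero n := ⟨by omega⟩
  have hR0 : ∀ i j, 0 ≤ R i j := fun i j => (hR i j).1
  have hR1 : ∀ i j, R i j ≤ 1 := fun i j => (hR i j).2
  obtain ⟨lam, v, hv1, hv0, hmul, hbound, hspec, habs⟩ := perron n hn0 R hsymm hR0
  have hsym' : ∀ a b, R b a = R a b := fun a b => congrFun (congrFun hsymm a) b
  -- R has a nonzero entry
  have hRexists : ∃ i j, R i j ≠ 0 := by
    by_contra h
    push_neg at h
    have hR00 : R = 0 := by ext i j; exact h i j
    obtain ⟨k, hk, hknz⟩ := hirr 0 0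
    apply hknz
    rw [hR00, zero_pow (by omega : k ≠ 0)]
    rfl
  obtain ⟨i₁, j₁, hij0⟩ := hRexists
  have hijne : i₁ ≠ j₁ := by
    intro h; subst h; exact hij0 (hdiag i₁)
  have hRijpos : 0 < R i₁ j₁ := lt_of_le_of_ne (hR0 i₁ j₁) (Ne.symm hij0)
  -- lam is positive
  have two_point : ∀ (c1 c2 : ℝ),
      ∑ a : Fin n, (if a = i₁ then c1 else if a = j₁ then c2 else 0) = c1 + c2 := by
    intro c1 c2
    have hpt : ∀ a : Fin n, (if a = i₁ then c1 else if a = j₁ then c2 else 0)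
        = (if a = i₁ then c1 else 0) + (if a = j₁ then c2 else 0) := by
      intro a
      by_cases h1 : a = i₁
      · subst h1; simp [hijne]
      · by_cases h2 : a = j₁ <;> simp [h1, h2, (Ne.symm hijne : ¬ j₁ = i₁)]
    rw [Finset.sum_congr rfl fun a _ => hpt a, Finset.sum_add_distrib]
    simp
  have hlam_pos : 0 < lam := by
    set u : EuclideanSpace ℝ (Fin n) :=
      WithLp.toLp 2 ((fun a => if a = i₁ then 1 else if a = j₁ then 1 else 0) : Fin n → ℝ) with hudef
    have hua : ∀ a, u a = if a = i₁ then 1 else if a = j₁ then 1 else 0 := fun a => rfl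
    have key1 : ∀ a, ∑ b, R a b * u b = R a i₁ + R a j₁ := by
      intro a
      have hpt : ∀ b, R a b * u b
          = (if b = i₁ then R a i₁ else if b = j₁ then R a j₁ else 0) := by
        intro b
        by_cases h1 : b = i₁
        · subst h1; simp [hua, hijne]
        · by_cases h2 : b = j₁
          · subst h2; simp [hua, h1]
          · simp [hua, h1, h2]
      rw [Finset.sum_congr rfl fun b _ => hpt b, two_point]
    have hLHS : ∑ a, (∑ b, R a b * u b) * u a = 2 * R i₁ j₁ := by
      have hpt : ∀ a, (∑ b, R a b * u b) * u a
          = (if a = i₁ then R i₁ i₁ + R i₁ j₁ else if a = j₁ then R j₁ i₁ + R j₁ j₁ else 0) := by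
        intro a
        rw [key1]
        by_cases h1 : a = i₁
        · subst h1; simp [hua]
        · by_cases h2 : a = j₁
          · subst h2; simp [hua, h1]
          · simp [hua, h1, h2]
      rw [Finset.sum_congr rfl fun a _ => hpt a, two_point]
      rw [hdiag i₁, hdiag j₁, hsym' i₁ j₁]
      ring
    have hnorm : ‖u‖^2 = 2 := by
      rw [euc_norm_sq]
      have hpt : ∀ a, u a ^ 2 = (if a = i₁ then (1:ℝ) else if a = j₁ then 1 else 0) := by
        intro a
        by_cases h1 : a = i₁
        · subst h1; simp [hua]
        · by_cases h2 : a = j₁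
          · subst h2; simp [hua, h1]
          · simp [hua, h1, h2]
      rw [Finset.sum_congr rfl fun a _ => hpt a, two_point]
      norm_num
    have := hbound u
    rw [hLHS, hnorm] at this
    linarith
  -- specRad R = lam, so μ < β * lam
  have hub : ∀ r ∈ {r : ℝ | ∃ z ∈ spectrum ℝ R, |z| = r}, r ≤ lam := by
    rintro r ⟨z, hz, rfl⟩
    exact habs z hz
  have hmemSS : lam ∈ {r : ℝ | ∃ z ∈ spectrum ℝ R, |z| = r} :=
    ⟨lam, hspec, abs_of_pos hlam_pos⟩
  have hsrad : specRad R = lam := by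
    unfold specRad
    exact le_antisymm (csSup_le ⟨lam, hmemSS⟩ hub) (le_csSup ⟨lam, hub⟩ hmemSS)
  have hμβ : μ < β * lam := by
    rw [hsrad] at hgt
    exact (div_lt_iff₀ hlam_pos).mp hgt
  -- positivity of the eigenvector
  have hmv : R.mulVec v = lam • (v : Fin n → ℝ) := by
    funext i
    simpa [Matrix.mulVec, dotProduct] using hmul i
  have hsum1 : ∑ i, (v i) ^ 2 = 1 := by
    rw [← euc_norm_sq, hv1]; norm_num
  have hvex : ∃ i0, v i0 ≠ 0 := by
    by_contra h
    push_neg at h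
    rw [Finset.sum_eq_zero (fun i _ => by rw [h i]; ring)] at hsum1
    exact zero_ne_one hsum1
  have hvpos : ∀ i, 0 < v i := by
    intro i
    rcases (hv0 i).lt_or_eq with h | h
    · exact h
    · exfalso
      obtain ⟨i0, hi0⟩ := hvex
      have hvi0 : 0 < v i0 := (hv0 i0).lt_of_ne (Ne.symm hi0)
      obtain ⟨k, hk, hknz⟩ := hirr i i0
      have hkpos : 0 < (R^k) i i0 :=
        (pow_entry_nonneg R hR0 k i i0).lt_of_ne (Ne.symm hknz)
      have h1 : ((R^k).mulVec (v : Fin n → ℝ)) i = lam^k * v i := by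
        rw [pow_mulVec_eig R (v : Fin n → ℝ) lam hmv k]; rfl
      have h2 : (R^k) i i0 * v i0 ≤ ((R^k).mulVec (v : Fin n → ℝ)) i := by
        have he : ((R^k).mulVec (v : Fin n → ℝ)) i = ∑ m, (R^k) i m * v m := rfl
        rw [he]
        exact Finset.single_le_sum
          (f := fun m => (R^k) i m * v m)
          (fun m _ => mul_nonneg (pow_entry_nonneg R hR0 k i m) (hv0 m))
          (Finset.mem_univ i0)
      have h3 : (0:ℝ) < (R^k) i i0 * v i0 := mul_pos hkpos hvi0
      rw [h1, ← h, mul_zero] at h2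
      linarith
  -- construct the subsolution x = ε v
  have hb : 0 < β * lam := mul_pos hβ.1 hlam_pos
  have hD : 0 < β * lam * (β * lam + 1) := mul_pos hb (by linarith)
  set c : ℝ := (β * lam - μ) / (β * lam * (β * lam + 1)) with hcdef
  have hc : 0 < c := div_pos (by linarith) hD
  haveI : Nonempty (Fin n) := ⟨0⟩
  set vmax : ℝ := Finset.univ.sup' Finset.univ_nonempty (fun i => v i) with hvmaxdef
  have hvmax_pos : 0 < vmax :=
    lt_of_lt_of_le (hvpos 0) (Finset.le_sup' _ (Finset.mem_univ 0))
  have hvle : ∀ i, v i ≤ vmax := fun i => Finset.le_sup' _ (Finset.mem_univ i)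
  set ε : ℝ := min c 1 / vmax with hεdef
  have hε : 0 < ε := div_pos (lt_min hc one_pos) hvmax_pos
  set x : Fin n → ℝ := fun i => ε * v i with hxdef
  have hxpos : ∀ i, 0 < x i := fun i => mul_pos hε (hvpos i)
  have hxle : ∀ i, x i ≤ min c 1 := by
    intro i
    have : x i ≤ ε * vmax := mul_le_mul_of_nonneg_left (hvle i) hε.le
    rw [hεdef] at this
    rwa [div_mul_cancel₀ _ (ne_of_gt hvmax_pos)] at this
  have hx1 : ∀ i, x i ≤ 1 := fun i => le_trans (hxle i) (min_le_right _ _)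
  have hxc : ∀ i, x i ≤ c := fun i => le_trans (hxle i) (min_le_left _ _)
  have hSx : ∀ i, ∑ j, β * R i j * x j = β * lam * x i := by
    intro i
    calc ∑ j, β * R i j * x j = (β * ε) * ∑ j, R i j * v j := by
          rw [Finset.mul_sum]
          exact Finset.sum_congr rfl fun j _ => by simp only [hxdef]; ring
      _ = (β * ε) * (lam * v i) := by rw [hmul i]
      _ = β * lam * x i := by simp only [hxdef]; ring
  -- x is a subsolution
  have hsub : ∀ i, x i ≤ F R β μ x i := by
    intro i
    have ha0 : ∀ j ∈ Finset.univ, 0 ≤ β * R i j * x j :=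
      fun j _ => mul_nonneg (mul_nonneg hβ.1.le (hR0 i j)) (hxpos j).le
    have ha1 : ∀ j ∈ Finset.univ, β * R i j * x j ≤ 1 := by
      intro j _
      have h1 : β * R i j ≤ 1 := by nlinarith [hβ.2, hR1 i j, hR0 i j, hβ.1]
      nlinarith [hxpos j, hx1 j]
    have hprod := prod_one_sub_le Finset.univ (fun j => β * R i j * x j) ha0 ha1
    rw [hSx i] at hprod
    have hm0 : (0:ℝ) ≤ 1 - (1 - μ) * x i := by nlinarith [hμ.1, hμ.2, hxpos i, hx1 i]
    have htc : x i * (β * lam * (β * lam + 1)) ≤ β * lam - μ := by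
      have h5 := hxc i
      rw [hcdef] at h5
      exact (le_div_iff₀ hD).mp h5
    have hgoal := scalar_sub μ (β * lam) (x i) hμ.1 hμ.2 hb (hxpos i) (hx1 i) htc
    have hmm := mul_le_mul_of_nonneg_left hprod hm0
    show x i ≤ 1 - (1 - (1 - μ) * x i) * ∏ j, (1 - β * R i j * x j)
    linarith [le_trans hmm hgoal]
  have hFmem := F_mem R β μ hβ.1 hβ.2 hμ.1 hμ.2 hR0 hR1
  have hFmono := F_mono R β μ hβ.1 hβ.2 hμ.1 hμ.2 hR0 hR1
  set Gz : ℕ → (Fin n → ℝ) := fun k => (F R β μ)^[k] x with hGzdef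
  have hGz0 : Gz 0 = x := rfl
  have hGzsucc : ∀ k, Gz (k + 1) = F R β μ (Gz k) := fun k => Function.iterate_succ_apply' _ _ _
  have hmemk : ∀ k i, 0 ≤ Gz k i ∧ Gz k i ≤ 1 := by
    intro k
    induction k with
    | zero => intro i; exact ⟨(hxpos i).le, hx1 i⟩
    | succ k ih => intro i; rw [hGzsucc]; exact hFmem (Gz k) ih i
  have hstep : ∀ k i, Gz k i ≤ Gz (k + 1) i := by
    intro k
    induction k with
    | zero => intro i; rw [hGzsucc, hGz0]; exact hsub i
    | succ k ih =>
      intro i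
      rw [hGzsucc (k + 1)]
      conv_lhs => rw [hGzsucc k]
      exact hFmono (Gz k) (Gz (k + 1)) (fun j => (hmemk k j).1) ih (fun j => (hmemk (k + 1) j).2) i
  have hmono_i : ∀ i, Monotone fun k => Gz k i :=
    fun i => monotone_nat_of_le_succ fun k => hstep k i
  have hbdd : ∀ i, BddAbove (Set.range fun k => Gz k i) := by
    intro i
    refine ⟨1, ?_⟩
    rintro r ⟨k, rfl⟩
    exact (hmemk k i).2
  set z₀ : Fin n → ℝ := fun i => ⨆ k, Gz k i with hz₀def
  have htend_i : ∀ i, Tendsto (fun k => Gz k i) atTop (nhds (z₀ i)) :=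
    fun i => tendsto_atTop_ciSup (hmono_i i) (hbdd i)
  have htend : Tendsto Gz atTop (nhds z₀) := tendsto_pi_nhds.mpr htend_i
  have hcont : Continuous (F R β μ) := F_cont R β μ
  have hfix : F R β μ z₀ = z₀ := by
    have h1 : Tendsto (fun k => Gz (k + 1)) atTop (nhds z₀) :=
      htend.comp (tendsto_add_atTop_nat 1)
    have h2 : Tendsto (fun k => F R β μ (Gz k)) atTop (nhds (F R β μ z₀)) :=
      (hcont.tendsto z₀).comp htend
    have h3 : (fun k => Gz (k + 1)) = fun k => F R β μ (Gz k) := funext hGzsucc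
    rw [h3] at h1
    exact tendsto_nhds_unique h2 h1
  have hz₀lb : ∀ i, x i ≤ z₀ i := fun i => le_ciSup (hbdd i) 0
  have hz₀ub : ∀ i, z₀ i ≤ 1 := fun i => ciSup_le fun k => (hmemk k i).2
  refine ⟨z₀, fun i => ⟨lt_of_lt_of_le (hxpos i) (hz₀lb i), ?_⟩, hfix⟩
  have hz₀0 : ∀ j, (0:ℝ) ≤ z₀ j := fun j => le_trans (hxpos j).le (hz₀lb j)
  have hP : (0:ℝ) < ∏ j, (1 - β * R i j * z₀ j) := by
    apply Finset.prod_pos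
    intro j _
    have hrz : R i j * z₀ j ≤ 1 := by
      nlinarith [mul_nonneg (hR0 i j) (by linarith [hz₀ub j] : (0:ℝ) ≤ 1 - z₀ j),
        hR1 i j, hz₀ub j, hR0 i j, hz₀0 j]
    nlinarith [mul_le_mul_of_nonneg_left hrz hβ.1.le, hβ.2]
  have hm : (0:ℝ) < 1 - (1 - μ) * z₀ i := by
    nlinarith [hμ.1, hμ.2, hz₀ub i, hz₀0 i]
  have hfi := congrFun hfix i
  simp only [F] at hfi
  nlinarith [mul_pos hm hP, hfi]
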